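/- Over the field F = ℚ(t_1,...,t_n), consider the acyclic complex D_*: 0 → F →^W F^n →^M F^n →^q F → 0 where M = I − γ with γw = w, uγ = u, W(f) = fw, q(v) = Σ u_i v_i, u_i = (t_1⋯t_i)^{-1}, w_i = 1 − t_i, and assume rank(M) = n−1. Then the torsion of D_* equals u_1 w_1 / det(M(1,1)) = (t_1^{-1}(1 − t_1)) / det((I−γ)(1,1)), i.e. τ(D_*) is the reciprocal of the Alexander function Δ = (t_1) det((I−γ)(1,1))/(1−t_1) up to units. -/

import Mathlib

/-- `IsTorsionOf N r d τ` says that τ is a Reidemeister torsion of the based acyclic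
chain complex over the field F with chain modules C_i = F^{r i} (standard bases) and
differentials d i : C_{i+1} → C_i given by matrices, supported in levels 0,…,N.
Following Milnor: there are families B i in C_i (bases of the boundaries) with lifts
Bt i in C_{i+1} (so d i (Bt i k) = B i k) such that at each level the combined family
(B_i, Bt_{i-1}) is a basis of C_i, and τ is the alternating product of the determinants
of the corresponding base-change matrices [B_i Bt_{i-1} | e_i] (indices matched by some
bijections, which accounts for the usual ± ambiguity). -/
def IsTorsionOf {F : Type*} [Field F] (N : ℕ) (r : ℕ → ℕ)
    (d : ∀ i : ℕ, Matrix (Fin (r i)) (Fin (r (i + 1))) F) (τ : F) : Prop :=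
  ∃ (b : ℕ → ℕ)
    (B : ∀ i, Fin (b i) → Fin (r i) → F)
    (Bt : ∀ i, Fin (b i) → Fin (r (i + 1)) → F)
    (e : ∀ i, Fin (r (i + 1)) ≃ (Fin (b (i + 1)) ⊕ Fin (b i)))
    (e0 : Fin (r 0) ≃ Fin (b 0)),
    (∀ i k, Matrix.mulVec (d i) (Bt i k) = B i k) ∧
    (let detAt : ℕ → F := fun i =>
      Nat.rec (motive := fun _ => F)
        (Matrix.det (Matrix.of fun (p q : Fin (r 0)) => B 0 (e0 q) p))
        (fun j _ => Matrix.det (Matrix.of fun (p q : Fin (r (j + 1))) =>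
          Sum.elim (fun k => B (j + 1) k p) (fun k => Bt j k p) (e j q))) i
    (∀ i, IsUnit (detAt i)) ∧
      τ * ∏ i ∈ Finset.range (N + 1), (if Odd i then detAt i else 1)
        = ∏ i ∈ Finset.range (N + 1), (if Even i then detAt i else 1))

/-- Dimensions of the complex 0 → F → F^{n+1} → F^{n+1} → F → 0
(levels 3, 2, 1, 0). -/
def stmtR (n : ℕ) : ℕ → ℕ
  | 0 => 1
  | 1 => n + 1
  | 2 => n + 1
  | 3 => 1
  | _ + 4 => 0

/-- Differentials of the complex 0 → F →^W F^{n+1} →^{I−γ} F^{n+1} →^q F → 0, where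
W(f) = f·w and q(v) = Σ u_i v_i. -/
def stmtD {F : Type*} [Field F] {n : ℕ}
    (γ : Matrix (Fin (n + 1)) (Fin (n + 1)) F) (u w : Fin (n + 1) → F) :
    ∀ i : ℕ, Matrix (Fin (stmtR n i)) (Fin (stmtR n (i + 1))) F
  | 0 => Matrix.of fun _ j => u j
  | 1 => (1 : Matrix (Fin (n + 1)) (Fin (n + 1)) F) - γ
  | 2 => Matrix.of fun i _ => w i
  | _ + 3 => 0

section Aux

variable {F : Type*} [Field F] {n : ℕ}

/-- ranks of the boundary groups -/
def auxb (n : ℕ) : ℕ → ℕ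
  | 0 => 1
  | 1 => n
  | 2 => 1
  | _ + 3 => 0

/-- chosen bases of the boundaries -/
def auxB (γ : Matrix (Fin (n + 1)) (Fin (n + 1)) F) (u w : Fin (n + 1) → F) :
    ∀ i, Fin (auxb n i) → Fin (stmtR n i) → F
  | 0 => fun _ _ => u 0
  | 1 => fun k p => (1 - γ) p k.succ
  | 2 => fun _ p => w p
  | _ + 3 => fun k => k.elim0

/-- chosen lifts of the boundary bases -/
def auxBt (γ : Matrix (Fin (n + 1)) (Fin (n + 1)) F) (u w : Fin (n + 1) → F) :
    ∀ i, Fin (auxb n i) → Fin (stmtR n (i + 1)) → F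
  | 0 => fun _ => (Pi.single 0 1 : Fin (n + 1) → F)
  | 1 => fun k => (Pi.single (Fin.succ k) 1 : Fin (n + 1) → F)
  | 2 => fun _ _ => 1
  | _ + 3 => fun k => k.elim0

def auxE0 (n : ℕ) : Fin (n + 1) ≃ (Fin n ⊕ Fin 1) where
  toFun := Fin.cases (Sum.inr 0) Sum.inl
  invFun := Sum.elim Fin.succ (fun _ => 0)
  left_inv x := by
    induction x using Fin.cases with
    | zero => simp
    | succ j => simp
  right_inv x := by
    rcases x with k | x
    · simp
    · simp [Fin.eq_zero x]

def auxE1 (n : ℕ) : Fin (n + 1) ≃ (Fin 1 ⊕ Fin n) where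
  toFun := Fin.cases (Sum.inl 0) Sum.inr
  invFun := Sum.elim (fun _ => 0) Fin.succ
  left_inv x := by
    induction x using Fin.cases with
    | zero => simp
    | succ j => simp
  right_inv x := by
    rcases x with x | k
    · simp [Fin.eq_zero x]
    · simp

def auxE2 : Fin 1 ≃ (Fin 0 ⊕ Fin 1) where
  toFun := Sum.inr
  invFun := Sum.elim Fin.elim0 id
  left_inv x := rfl
  right_inv x := by
    rcases x with x | x
    · exact x.elim0
    · rfl

/-- index matching equivalences -/
def auxE (n : ℕ) : ∀ i, Fin (stmtR n (i + 1)) ≃ (Fin (auxb n (i + 1)) ⊕ Fin (auxb n i))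
  | 0 => auxE0 n
  | 1 => auxE1 n
  | 2 => auxE2
  | _ + 3 =>
    { toFun := fun x => Fin.elim0 x
      invFun := fun x => Sum.elim Fin.elim0 Fin.elim0 x
      left_inv := fun x => Fin.elim0 x
      right_inv := fun x => by rcases x with y | y <;> exact Fin.elim0 y }

end Aux

set_option maxHeartbeats 1000000

/-- Over F = ℚ(t_1,…,t_{n+1}), let γ be a matrix with γw = w and uγ = u
where w_i = 1 − t_i and u_i = (t_1⋯t_i)^{-1}, and rank(I−γ) = n (one less than the
size).  Then the torsion of the acyclic based complex
0 → F →^W F^{n+1} →^{I−γ} F^{n+1} →^q F → 0 equals u_1 w_1 / det((I−γ)(1,1))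
(up to sign). -/
theorem stmt18 {n : ℕ}
    (γ : Matrix (Fin (n + 1)) (Fin (n + 1)) (FractionRing (MvPolynomial (Fin (n + 1)) ℚ))) :
    let F := FractionRing (MvPolynomial (Fin (n + 1)) ℚ)
    let t : Fin (n + 1) → F := fun i =>
      algebraMap (MvPolynomial (Fin (n + 1)) ℚ) F (MvPolynomial.X i)
    let w : Fin (n + 1) → F := fun i => 1 - t i
    let u : Fin (n + 1) → F := fun i => (∏ j ∈ Finset.Iic i, t j)⁻¹
    γ.mulVec w = w → Matrix.vecMul u γ = u → (1 - γ).rank = n →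
    (IsTorsionOf 4 (stmtR n) (stmtD γ u w)
        (u 0 * w 0 / ((1 - γ).submatrix Fin.succ Fin.succ).det) ∨
      IsTorsionOf 4 (stmtR n) (stmtD γ u w)
        (-(u 0 * w 0 / ((1 - γ).submatrix Fin.succ Fin.succ).det))) := by
  intro F t w u hw hu hrank
  classical
  set M : Matrix (Fin (n + 1)) (Fin (n + 1)) F := 1 - γ with hMdef
  -- basic nonvanishing facts
  have hinj : Function.Injective (algebraMap (MvPolynomial (Fin (n + 1)) ℚ) F) :=
    IsFractionRing.injective _ _
  have ht0 : ∀ i, t i ≠ 0 := by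
    intro i h
    have h2 : algebraMap (MvPolynomial (Fin (n + 1)) ℚ) F (MvPolynomial.X i)
        = algebraMap (MvPolynomial (Fin (n + 1)) ℚ) F 0 := by rw [map_zero]; exact h
    exact MvPolynomial.X_ne_zero i (hinj h2)
  have ht1 : t 0 ≠ 1 := by
    intro h
    have h2 : algebraMap (MvPolynomial (Fin (n + 1)) ℚ) F (MvPolynomial.X 0)
        = algebraMap (MvPolynomial (Fin (n + 1)) ℚ) F 1 := by rw [map_one]; exact h
    have h3 := congrArg MvPolynomial.constantCoeff (hinj h2)
    simp at h3
  have hu0 : u 0 ≠ 0 :=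
    inv_ne_zero (Finset.prod_ne_zero_iff.mpr fun j _ => ht0 j)
  have hw0 : w 0 ≠ 0 := sub_ne_zero.mpr (Ne.symm ht1)
  have hMw : Matrix.mulVec M w = 0 := by
    rw [hMdef, Matrix.sub_mulVec, Matrix.one_mulVec, hw, sub_self]
  have huM : Matrix.vecMul u M = 0 := by
    rw [hMdef, Matrix.vecMul_sub, Matrix.vecMul_one, hu, sub_self]
  -- the kernel of M is one dimensional
  have hkfin : Module.finrank F (LinearMap.ker M.mulVecLin) = 1 := by
    have h1 := LinearMap.finrank_range_add_finrank_ker M.mulVecLin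
    rw [Module.finrank_fin_fun] at h1
    have h2 : Module.finrank F (LinearMap.range M.mulVecLin) = n := hrank
    omega
  have hker : ∀ v : Fin (n + 1) → F, Matrix.mulVec M v = 0 → ∃ c : F, c • w = v := by
    intro v hv
    have hwk : w ∈ LinearMap.ker M.mulVecLin := by
      simpa [LinearMap.mem_ker, Matrix.mulVecLin_apply] using hMw
    have hvk : v ∈ LinearMap.ker M.mulVecLin := by
      simpa [LinearMap.mem_ker, Matrix.mulVecLin_apply] using hv
    have hwne : (⟨w, hwk⟩ : LinearMap.ker M.mulVecLin) ≠ 0 := by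
      intro h
      exact hw0 (by simpa using congrFun (congrArg Subtype.val h) 0)
    obtain ⟨c, hc⟩ := (finrank_eq_one_iff_of_nonzero' _ hwne).mp hkfin ⟨v, hvk⟩
    exact ⟨c, congrArg Subtype.val hc⟩
  -- the key matrix A
  set A : Matrix (Fin (n + 1)) (Fin (n + 1)) F :=
    Matrix.of fun p q =>
      Fin.cases (motive := fun _ => F) (if p = 0 then 1 else 0)
        (fun j => M p j.succ) q with hAdef
  have hA0 : ∀ p, A p 0 = (Pi.single 0 1 : Fin (n + 1) → F) p := by
    intro p; rw [hAdef]; simp [Pi.single_apply]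
  have hAs : ∀ p (j : Fin n), A p j.succ = M p j.succ := by
    intro p j; rw [hAdef]; simp
  have hAdet : A.det = (M.submatrix Fin.succ Fin.succ).det := by
    rw [Matrix.det_succ_column_zero, Finset.sum_eq_single 0]
    · have hsub : A.submatrix (Fin.succAbove 0) Fin.succ = M.submatrix Fin.succ Fin.succ := by
        ext p q
        simp only [Matrix.submatrix_apply, Fin.succAbove_zero]
        exact hAs p.succ q
      rw [hsub, hA0]
      simp
    · intro b _ hb
      rw [hA0]
      simp [Pi.single_apply, hb]
    · simp
  have hAne : A.det ≠ 0 := by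
    intro h0
    obtain ⟨v, hvne, hv0⟩ := (Matrix.exists_mulVec_eq_zero_iff).mpr h0
    set v' : Fin (n + 1) → F := fun j =>
      Fin.cases (motive := fun _ => F) 0 (fun k => v k.succ) j with hv'def
    have hv'0 : v' 0 = 0 := by rw [hv'def]; simp
    have hv's : ∀ k : Fin n, v' k.succ = v k.succ := by
      intro k; rw [hv'def]; simp
    have hsplit : Matrix.mulVec A v
        = v 0 • (Pi.single 0 1 : Fin (n + 1) → F) + Matrix.mulVec M v' := by
      funext p
      rw [Pi.add_apply, Pi.smul_apply, smul_eq_mul]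
      show (∑ q, A p q * v q)
        = v 0 * (Pi.single 0 1 : Fin (n + 1) → F) p + ∑ q, M p q * v' q
      rw [Fin.sum_univ_succ, Fin.sum_univ_succ (f := fun q => M p q * v' q),
        hA0, hv'0, mul_zero, zero_add,
        mul_comm ((Pi.single 0 1 : Fin (n + 1) → F) p) (v 0)]
      have hs : (∑ j : Fin n, A p j.succ * v j.succ)
          = ∑ j : Fin n, M p j.succ * v' j.succ :=
        Finset.sum_congr rfl fun j _ => by rw [hAs, hv's]
      rw [hs]
    have h1 : dotProduct u (Matrix.mulVec A v) = v 0 * u 0 := by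
      rw [hsplit, dotProduct_add, dotProduct_smul,
        Matrix.dotProduct_mulVec, huM, zero_dotProduct, add_zero,
        dotProduct_single, smul_eq_mul, mul_one]
    have hv00 : v 0 = 0 := by
      rw [hv0] at h1
      simp only [dotProduct_zero] at h1
      rcases mul_eq_zero.mp h1.symm with h | h
      · exact h
      · exact absurd h hu0
    have hMv' : Matrix.mulVec M v' = 0 := by
      have h2 := hsplit
      rw [hv0, hv00, zero_smul, zero_add] at h2
      exact h2.symm
    obtain ⟨c, hc⟩ := hker v' hMv'
    have hc0 : c = 0 := by
      have h2 := congrFun hc 0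
      rw [hv'0] at h2
      simp only [Pi.smul_apply, smul_eq_mul] at h2
      rcases mul_eq_zero.mp h2 with h | h
      · exact h
      · exact absurd h hw0
    have hv'z : v' = 0 := by rw [← hc, hc0, zero_smul]
    apply hvne
    funext p
    induction p using Fin.cases with
    | zero => exact hv00
    | succ k =>
      have h3 := hv's k
      rw [hv'z] at h3
      exact h3.symm
  have hd11 : (M.submatrix Fin.succ Fin.succ).det ≠ 0 := hAdet ▸ hAne
  have he0z : auxE n 0 (0 : Fin (n + 1)) = Sum.inr (0 : Fin 1) := rfl
  have he0s : ∀ j : Fin n, auxE n 0 j.succ = Sum.inl j := fun _ => rfl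
  have he1z : auxE n 1 (0 : Fin (n + 1)) = Sum.inl (0 : Fin 1) := rfl
  have he1s : ∀ j : Fin n, auxE n 1 j.succ = Sum.inr j := fun _ => rfl
  -- auxiliary det computations
  have E0 : Matrix.det (Matrix.of fun p q : Fin 1 =>
      auxB γ u w 0 ((Equiv.refl (Fin 1)) q) p) = u 0 := by
    rw [Matrix.det_fin_one]; rfl
  have hA1eq : (Matrix.of fun p q : Fin (n + 1) =>
      Sum.elim (fun k => auxB γ u w 1 k p) (fun k => auxBt γ u w 0 k p) (auxE n 0 q)) = A := by
    ext p q
    induction q using Fin.cases with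
    | zero =>
      rw [hA0]
      simp only [Matrix.of_apply]
      rw [he0z]
      rfl
    | succ j =>
      rw [hAs]
      simp only [Matrix.of_apply]
      rw [he0s j]
      simp [auxB, hMdef]
      rfl
  have E1 : Matrix.det (Matrix.of fun p q : Fin (n + 1) =>
      Sum.elim (fun k => auxB γ u w 1 k p) (fun k => auxBt γ u w 0 k p) (auxE n 0 q))
      = (M.submatrix Fin.succ Fin.succ).det := by
    rw [hA1eq, hAdet]
  -- level 2
  set A2 : Matrix (Fin (n + 1)) (Fin (n + 1)) F :=
    Matrix.of fun p q =>
      Fin.cases (motive := fun _ => F) (w p)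
        (fun j => if p = Fin.succ j then 1 else 0) q with hA2def
  have hA2_0 : ∀ p, A2 p 0 = w p := by intro p; rw [hA2def]; simp
  have hA2_s : ∀ p (j : Fin n), A2 p j.succ = (Pi.single (Fin.succ j) 1 : Fin (n + 1) → F) p := by
    intro p j; rw [hA2def]; simp [Pi.single_apply]
  have hA2eq : (Matrix.of fun p q : Fin (n + 1) =>
      Sum.elim (fun k => auxB γ u w 2 k p) (fun k => auxBt γ u w 1 k p) (auxE n 1 q)) = A2 := by
    ext p q
    induction q using Fin.cases with
    | zero =>
      simp only [Matrix.of_apply]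
      rw [he1z, hA2_0]
      rfl
    | succ j =>
      simp only [Matrix.of_apply]
      rw [he1s j, hA2_s]
      simp [auxBt, Pi.single_apply]
      rfl
  have E2 : Matrix.det (Matrix.of fun p q : Fin (n + 1) =>
      Sum.elim (fun k => auxB γ u w 2 k p) (fun k => auxBt γ u w 1 k p) (auxE n 1 q))
      = w 0 := by
    rw [hA2eq, Matrix.det_succ_row_zero, Finset.sum_eq_single 0]
    · have hsub : A2.submatrix Fin.succ (Fin.succAbove 0) = 1 := by
        ext p q
        simp only [Matrix.submatrix_apply, Fin.succAbove_zero]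
        rw [hA2_s]
        simp [Pi.single_apply, Matrix.one_apply, Fin.succ_inj, eq_comm]
      rw [hsub, hA2_0]
      simp
    · intro b _ hb
      obtain ⟨k, rfl⟩ := Fin.eq_succ_of_ne_zero hb
      rw [hA2_s]
      simp [Pi.single_apply, (Fin.succ_ne_zero k).symm]
    · simp
  have E3 : Matrix.det (Matrix.of fun p q : Fin 1 =>
      Sum.elim (fun k => auxB γ u w 3 k p) (fun k => auxBt γ u w 2 k p) (auxE n 2 q)) = 1 := by
    rw [Matrix.det_fin_one]; rfl
  -- assemble the torsion witness
  refine Or.inl ⟨auxb n, auxB γ u w, auxBt γ u w, auxE n,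
    (Equiv.refl (Fin 1) : Fin (stmtR n 0) ≃ Fin (auxb n 0)), ?_, ?_, ?_⟩
  · -- the lifting condition
    intro i k
    match i with
    | 0 =>
      show Matrix.mulVec (Matrix.of fun (_ : Fin 1) j => u j)
        ((Pi.single 0 1 : Fin (n + 1) → F)) = fun _ => u 0
      rw [Matrix.mulVec_single]
      funext p
      simp
    | 1 =>
      show Matrix.mulVec M ((Pi.single (Fin.succ k) 1 : Fin (n + 1) → F))
        = fun p => (1 - γ) p k.succ
      rw [Matrix.mulVec_single]
      funext p
      rw [hMdef]
      simp
      rfl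
    | 2 =>
      show Matrix.mulVec (Matrix.of fun i (_ : Fin 1) => w i) (fun _ => (1 : F))
        = fun p => w p
      funext p
      show (∑ q : Fin 1, w p * 1) = w p
      simp
    | (i + 3) => exact k.elim0
  · -- the determinants are units
    intro i
    match i with
    | 0 =>
      show IsUnit (Matrix.det (Matrix.of fun p q : Fin 1 =>
        auxB γ u w 0 ((Equiv.refl (Fin 1)) q) p))
      rw [E0]
      exact isUnit_iff_ne_zero.mpr hu0
    | 1 =>
      show IsUnit (Matrix.det (Matrix.of fun p q : Fin (n + 1) =>
        Sum.elim (fun k => auxB γ u w 1 k p) (fun k => auxBt γ u w 0 k p) (auxE n 0 q)))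
      rw [E1]
      exact isUnit_iff_ne_zero.mpr hd11
    | 2 =>
      show IsUnit (Matrix.det (Matrix.of fun p q : Fin (n + 1) =>
        Sum.elim (fun k => auxB γ u w 2 k p) (fun k => auxBt γ u w 1 k p) (auxE n 1 q)))
      rw [E2]
      exact isUnit_iff_ne_zero.mpr hw0
    | 3 =>
      show IsUnit (Matrix.det (Matrix.of fun p q : Fin 1 =>
        Sum.elim (fun k => auxB γ u w 3 k p) (fun k => auxBt γ u w 2 k p) (auxE n 2 q)))
      rw [E3]
      exact isUnit_one
    | (k + 4) =>
      haveI : IsEmpty (Fin (stmtR n (k + 3 + 1))) := by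
        show IsEmpty (Fin 0); infer_instance
      have h4 : Matrix.det (Matrix.of fun p q : Fin (stmtR n (k + 3 + 1)) =>
          Sum.elim (fun k' => auxB γ u w (k + 3 + 1) k' p)
            (fun k' => auxBt γ u w (k + 3) k' p) (auxE n (k + 3) q)) = 1 :=
        Matrix.det_isEmpty
      show IsUnit (Matrix.det (Matrix.of fun p q : Fin (stmtR n (k + 3 + 1)) =>
        Sum.elim (fun k' => auxB γ u w (k + 3 + 1) k' p)
          (fun k' => auxBt γ u w (k + 3) k' p) (auxE n (k + 3) q)))
      rw [h4]
      exact isUnit_one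
  · -- the torsion identity
    haveI hie : ∀ k : ℕ, IsEmpty (Fin (stmtR n (k + 3 + 1))) := fun k => by
      show IsEmpty (Fin 0); infer_instance
    have E4 : ∀ k : ℕ, Matrix.det (Matrix.of fun p q : Fin (stmtR n (k + 3 + 1)) =>
        Sum.elim (fun k' => auxB γ u w (k + 3 + 1) k' p)
          (fun k' => auxBt γ u w (k + 3) k' p) (auxE n (k + 3) q)) = 1 := fun k =>
      Matrix.det_isEmpty
    have hDR : ∀ i : ℕ, (Nat.rec (motive := fun _ => F)
        (Matrix.det (Matrix.of fun p q : Fin (stmtR n 0) =>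
          auxB γ u w 0 ((Equiv.refl (Fin 1)) q) p))
        (fun j _ => Matrix.det (Matrix.of fun p q : Fin (stmtR n (j + 1)) =>
          Sum.elim (fun k => auxB γ u w (j + 1) k p) (fun k => auxBt γ u w j k p) (auxE n j q)))
        i)
        = (if i = 0 then u 0 else if i = 1 then (M.submatrix Fin.succ Fin.succ).det
            else if i = 2 then w 0 else 1) := by
      intro i
      match i with
      | 0 => exact E0
      | 1 => exact E1
      | 2 => exact E2
      | 3 => exact E3
      | (k + 4) => exact E4 (k + 1)
    have key : ∀ f : ℕ → F, (∀ i : ℕ, f i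
          = (if i = 0 then u 0 else if i = 1 then (M.submatrix Fin.succ Fin.succ).det
              else if i = 2 then w 0 else 1)) →
        (u 0 * w 0 / (M.submatrix Fin.succ Fin.succ).det *
            ∏ i ∈ Finset.range (4 + 1), (if Odd i then f i else 1)
          = ∏ i ∈ Finset.range (4 + 1), (if Even i then f i else 1)) := by
      intro f hf
      simp only [Finset.prod_range_succ, Finset.prod_range_zero, hf]
      norm_num
      exact div_mul_cancel₀ _ hd11
    exact key _ hDR
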